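/- Let k ≥ 3 and let a_1,…,a_k, b_1,…,b_k, c_1,…,c_{k−1}, d_1,…,d_{k−1} be elements of a poset such that: (1) a_j ≤ c_j ≤ b_{j+1} and b_j ≥ d_j ≥ a_{j+1} for every j ∈ [k−1]; (2) c_1 ≤ ⋯ ≤ c_{k−1} and d_1 ≥ ⋯ ≥ d_{k−1}; (3) a_j ≰ b_j for every j ∈ [k]. Then the elements a_2,…,a_{k−1}, b_2,…,b_{k−1}, c_1,…,c_{k−1}, d_1,…,d_{k−1} are pairwise distinct and induce the Kelly example 𝒦_k as a subposet. -/

import Mathlib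

/-! ### Poset dimension and Boolean dimension -/

/-- The (Dushnik–Miller) dimension of a poset: the least `d` such that the order
is the intersection of `d` linear orders on `X`. -/
noncomputable def posetDim (X : Type*) [PartialOrder X] : ℕ :=
  sInf {d : ℕ | ∃ L : Fin d → X → X → Prop,
    (∀ i, IsLinearOrder X (L i)) ∧ ∀ x y : X, x ≤ y ↔ ∀ i, L i x y}

/-- `(X,≤)` has a Boolean realizer of size `b`: linear orders `L 0, …, L (b-1)` and a
decoder `f` such that for distinct `x y`, `x ≤ y` iff `f` of the vector of truth values
`L i x y` holds.  Boolean dimension at most `b` is equivalent to this. -/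
def hasBoolRealizer (X : Type*) [PartialOrder X] (b : ℕ) : Prop :=
  ∃ (L : Fin b → X → X → Prop) (f : (Fin b → Prop) → Prop),
    (∀ i, IsLinearOrder X (L i)) ∧
    ∀ x y : X, x ≠ y → (x ≤ y ↔ f (fun i => L i x y))

/-! ### Standard examples -/

/-- The order of the standard example `S_k`: elements `a_i = inl i`, `b_j = inr j`,
with `a_i < b_j` iff `i ≠ j` and no other strict comparabilities. -/
def stdLE (k : ℕ) : Fin k ⊕ Fin k → Fin k ⊕ Fin k → Prop
  | Sum.inl i, Sum.inl j => i = j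
  | Sum.inr i, Sum.inr j => i = j
  | Sum.inl i, Sum.inr j => i ≠ j
  | Sum.inr _, Sum.inl _ => False

/-- `X` contains the standard example `S_k` as a subposet. -/
def ContainsStd (X : Type*) [PartialOrder X] (k : ℕ) : Prop :=
  ∃ φ : Fin k ⊕ Fin k → X, Function.Injective φ ∧
    ∀ p q, stdLE k p q ↔ φ p ≤ φ q

/-! ### Kelly examples -/

/-- Index type for the elements of the Kelly example `𝒦_k`:
`inl (inl j)` is `a_{j+2}`, `inl (inr j)` is `b_{j+2}`,
`inr (inl i)` is `c_{i+1}`, `inr (inr i)` is `d_{i+1}`. -/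
abbrev KellyIdx (k : ℕ) := (Fin (k - 2) ⊕ Fin (k - 2)) ⊕ (Fin (k - 1) ⊕ Fin (k - 1))

/-- Generating strict relations of the Kelly example `𝒦_k` (in actual indices:
`a_2,…,a_i < c_i`; `c_i < b_{i+1},…,b_{k-1}`; `a_{i+1},…,a_{k-1} < d_i`;
`d_i < b_2,…,b_i`; the chains `c_1 < ⋯ < c_{k-1}` and `d_1 > ⋯ > d_{k-1}`). -/
def kellyGen (k : ℕ) : KellyIdx k → KellyIdx k → Prop
  | Sum.inl (Sum.inl j), Sum.inr (Sum.inl i) => (j : ℕ) + 1 ≤ (i : ℕ)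
  | Sum.inr (Sum.inl i), Sum.inl (Sum.inr j) => (i : ℕ) ≤ (j : ℕ)
  | Sum.inl (Sum.inl j), Sum.inr (Sum.inr i) => (i : ℕ) ≤ (j : ℕ)
  | Sum.inr (Sum.inr i), Sum.inl (Sum.inr j) => (j : ℕ) + 1 ≤ (i : ℕ)
  | Sum.inr (Sum.inl i), Sum.inr (Sum.inl i') => (i : ℕ) < (i' : ℕ)
  | Sum.inr (Sum.inr i), Sum.inr (Sum.inr i') => (i' : ℕ) < (i : ℕ)
  | _, _ => False

/-- The order of the Kelly example `𝒦_k`: the reflexive-transitive closure of the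
generating relations. -/
def kellyLE (k : ℕ) : KellyIdx k → KellyIdx k → Prop :=
  Relation.ReflTransGen (kellyGen k)

/-- `X` contains the Kelly example `𝒦_k` as a subposet. -/
def ContainsKelly (X : Type*) [PartialOrder X] (k : ℕ) : Prop :=
  ∃ φ : KellyIdx k → X, Function.Injective φ ∧
    ∀ p q, kellyLE k p q ↔ φ p ≤ φ q

/-! ### Cover graphs, minors, tree decompositions -/

/-- `y` covers `x` with respect to the relation `r`. -/
def coverAdjOf {V : Type*} (r : V → V → Prop) (x y : V) : Prop :=
  x ≠ y ∧ r x y ∧ ∀ z, r x z → r z y → z = x ∨ z = y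

/-- The cover graph of the relation `r` (for a partial order `r`, vertices are joined
iff one covers the other). -/
def coverGraphOf {V : Type*} (r : V → V → Prop) : SimpleGraph V where
  Adj x y := coverAdjOf r x y ∨ coverAdjOf r y x
  symm := ⟨fun _ _ h => Or.symm h⟩
  loopless := ⟨fun _ h => by rcases h with h | h <;> exact h.1 rfl⟩

/-- `H` is a minor of `G`: there is a model of `H` in `G`, i.e. pairwise disjoint
branch sets inducing connected subgraphs, joined by edges of `G` for each edge of `H`. -/
def GraphIsMinor {V W : Type*} (H : SimpleGraph V) (G : SimpleGraph W) : Prop :=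
  ∃ M : V → Set W,
    (∀ x, (G.induce (M x)).Connected) ∧
    (∀ x y, x ≠ y → Disjoint (M x) (M y)) ∧
    (∀ x y, H.Adj x y → ∃ a ∈ M x, ∃ b ∈ M y, G.Adj a b)

/-- A tree decomposition of the graph `G` with nodes `ν`. -/
structure TreeDecomp {V : Type*} (G : SimpleGraph V) (ν : Type*) where
  tree : SimpleGraph ν
  isTree : tree.IsTree
  bag : ν → Set V
  bag_connected : ∀ v : V, (tree.induce {u | v ∈ bag u}).Connected
  bag_edge : ∀ x y : V, G.Adj x y → ∃ u, x ∈ bag u ∧ y ∈ bag u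

/-- `G` has treewidth at most `w`: it has a tree decomposition all of whose bags
have at most `w + 1` elements. -/
def treewidthLE {V : Type*} (G : SimpleGraph V) (w : ℕ) : Prop :=
  ∃ (ν : Type) (td : TreeDecomp G ν), ∀ u, (td.bag u).ncard ≤ w + 1

/-! ### Binary trees via positions -/

/-- A binary tree with leaves labelled by `X`. -/
inductive BTree (X : Type*) where
  | leaf (x : X)
  | node (l r : BTree X)

namespace BTree

/-- The subtree of `t` at position `p` (`false` = go left, `true` = go right). -/
def subtreeAt {X : Type*} : BTree X → List Bool → Option (BTree X)
  | t, [] => some t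
  | leaf _, _ :: _ => none
  | node l r, b :: p => subtreeAt (if b then r else l) p

/-- `p` is a valid position (node) of `t`. -/
def IsPos {X : Type*} (t : BTree X) (p : List Bool) : Prop :=
  (t.subtreeAt p).isSome

/-- `p` is an inner node of `t` (neither the root nor a leaf). -/
def IsInner {X : Type*} (t : BTree X) (p : List Bool) : Prop :=
  p ≠ [] ∧ ∃ l r : BTree X, t.subtreeAt p = some (node l r)

/-- The multiset of leaf labels of `t`. -/
def leaves {X : Type*} : BTree X → Multiset X
  | leaf x => {x}
  | node l r => leaves l + leaves r

end BTree

/-- Longest common prefix of two positions: the position of the lowest common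
ancestor of the two nodes. -/
def lcp : List Bool → List Bool → List Bool
  | a :: as, b :: bs => if a = b then a :: lcp as bs else []
  | _, _ => []

/-! ### NLC-decompositions -/

/-- An NLC-decomposition of the finite poset `(X, ≤)` with label set `Q`:
a binary tree with leaf set exactly `X`, initial labels `init`, relabelings
`rel u v : Q → Q` for `u` a strict ancestor of `v` satisfying the composition law,
and status relations `R`, `R'` encoding the order at lowest common ancestors. -/
structure NLCDecomp (X : Type*) [PartialOrder X] [Fintype X] (Q : Type*) where
  tree : BTree X
  pos : X → List Bool
  pos_spec : ∀ x, tree.subtreeAt (pos x) = some (BTree.leaf x)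
  leaves_eq : tree.leaves = (Finset.univ : Finset X).val
  init : X → Q
  rel : List Bool → List Bool → Q → Q
  rel_comp : ∀ u v w : List Bool, tree.IsPos w →
    u <+: v → u ≠ v → v <+: w → v ≠ w →
    ∀ γ : Q, rel u v (rel v w γ) = rel u w γ
  R : List Bool → Set (Q × Q)
  R' : List Bool → Set (Q × Q)
  encode : ∀ x y : X, x ≠ y →
    (lcp (pos x) (pos y) ++ [false]) <+: pos x →
    (lcp (pos x) (pos y) ++ [true]) <+: pos y →
    ((x ≤ y ↔ (rel (lcp (pos x) (pos y)) (pos x) (init x),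
               rel (lcp (pos x) (pos y)) (pos y) (init y)) ∈ R (lcp (pos x) (pos y))) ∧
     (y ≤ x ↔ (rel (lcp (pos x) (pos y)) (pos y) (init y),
               rel (lcp (pos x) (pos y)) (pos x) (init x)) ∈ R' (lcp (pos x) (pos y))))

namespace NLCDecomp

variable {X Q : Type*} [PartialOrder X] [Fintype X]

/-- The label `ℓ(u,x)` of the leaf `x` at its ancestor `u`. -/
def lab (D : NLCDecomp X Q) (u : List Bool) (x : X) : Q :=
  if u = D.pos x then D.init x else D.rel u (D.pos x) (D.init x)

/-- The set `L≤(x,v)` of labels `γ` such that `x ≤ γ` at `v`, for `x ∉ X(v)`. -/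
def Lle (D : NLCDecomp X Q) (x : X) (v : List Bool) : Set Q :=
  { γ | ((lcp (D.pos x) v ++ [false]) <+: D.pos x ∧
          (D.lab (lcp (D.pos x) v) x, D.rel (lcp (D.pos x) v) v γ) ∈ D.R (lcp (D.pos x) v)) ∨
        (¬ (lcp (D.pos x) v ++ [false]) <+: D.pos x ∧
          (D.rel (lcp (D.pos x) v) v γ, D.lab (lcp (D.pos x) v) x) ∈ D.R' (lcp (D.pos x) v)) }

/-- The set `L≥(x,v)` of labels `γ` such that `x ≥ γ` at `v`, for `x ∉ X(v)`. -/
def Lge (D : NLCDecomp X Q) (x : X) (v : List Bool) : Set Q :=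
  { γ | ((lcp (D.pos x) v ++ [false]) <+: D.pos x ∧
          (D.lab (lcp (D.pos x) v) x, D.rel (lcp (D.pos x) v) v γ) ∈ D.R' (lcp (D.pos x) v)) ∨
        (¬ (lcp (D.pos x) v ++ [false]) <+: D.pos x ∧
          (D.rel (lcp (D.pos x) v) v γ, D.lab (lcp (D.pos x) v) x) ∈ D.R (lcp (D.pos x) v)) }

end NLCDecomp

/-- `X` has NLC-width at most `q`. -/
def nlcWidthLE (X : Type*) [PartialOrder X] [Fintype X] (q : ℕ) : Prop :=
  ∃ m : ℕ, m ≤ q ∧ Nonempty (NLCDecomp X (Fin m))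

/-! ### Splits, h-neighbors, h-chains, h-crosses -/

/-- `u` and `v` are `h`-neighbors with respect to the split `s`. -/
def HNbr {X Q : Type*} [PartialOrder X] [Fintype X] (D : NLCDecomp X Q)
    (s : List Bool → ℕ) (h : ℕ) (u v : List Bool) : Prop :=
  D.tree.IsInner u ∧ D.tree.IsInner v ∧ u <+: v ∧ u ≠ v ∧ s u = h ∧ s v = h ∧
    ∀ w, u <+: w → w <+: v → w ≠ u → w ≠ v → s w ≤ h

/-- `s` is a decent split of order `p`: it maps inner nodes into `[p]` and is
forward Ramseyan with respect to the relabeling assignment of `D`. -/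
def DecentSplit {X Q : Type*} [PartialOrder X] [Fintype X] (D : NLCDecomp X Q)
    (s : List Bool → ℕ) (p : ℕ) : Prop :=
  (∀ u, D.tree.IsInner u → 1 ≤ s u ∧ s u ≤ p) ∧
  (∀ h u v u' v', HNbr D s h u v → HNbr D s h u' v' →
    ∀ γ : Q, D.rel u v (D.rel u' v' γ) = D.rel u v γ)

/-- The set `E_h` of relabelings between `h`-neighbors. -/
def Eh {X Q : Type*} [PartialOrder X] [Fintype X] (D : NLCDecomp X Q)
    (s : List Bool → ℕ) (h : ℕ) : Set (Q → Q) :=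
  { σ | ∃ u v, HNbr D s h u v ∧ σ = D.rel u v }

/-- `A` is an `E_h`-class (an equivalence class of `α ≡_h β ⇔ ∀ σ ∈ E_h, σ α = σ β`). -/
def IsEhClass {X Q : Type*} [PartialOrder X] [Fintype X] (D : NLCDecomp X Q)
    (s : List Bool → ℕ) (h : ℕ) (A : Set Q) : Prop :=
  ∃ α : Q, A = { β : Q | ∀ σ ∈ Eh D s h, σ β = σ α }

/-- `c 0, c 1, …, c ℓ` is an `h`-chain of length `ℓ`: mutual `h`-neighbors,
each a strict ancestor of the next. -/
def IsHChain {X Q : Type*} [PartialOrder X] [Fintype X] (D : NLCDecomp X Q)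
    (s : List Bool → ℕ) (h ℓ : ℕ) (c : ℕ → List Bool) : Prop :=
  ∀ i j : ℕ, i < j → j ≤ ℓ → HNbr D s h (c i) (c j)

/-- There exists an `h`-cross. -/
def HCross {X Q : Type*} [PartialOrder X] [Fintype X] (D : NLCDecomp X Q)
    (s : List Bool → ℕ) (h : ℕ) : Prop :=
  ∃ (u v : List Bool) (x y : X) (σ : Q → Q),
    HNbr D s h u v ∧
    u <+: D.pos x ∧ ¬ v <+: D.pos x ∧
    u <+: D.pos y ∧ ¬ v <+: D.pos y ∧
    ¬ x ≤ y ∧ ¬ y ≤ x ∧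
    σ ∈ Eh D s h ∧
    σ (D.lab u x) ∈ D.Lge y v ∧ σ (D.lab u y) ∈ D.Lle x v

/-! ### Rooted trees (general), consistent orders, semigroup labelings -/

/-- A rooted tree on the node set `ν`, given by its parent function. -/
structure ParentTree (ν : Type*) where
  root : ν
  parent : ν → ν
  parent_root : parent root = root
  reach : ∀ v, ∃ n : ℕ, parent^[n] v = root

namespace ParentTree

/-- `u` is an ancestor of `v` (allowing `u = v`). -/
def Anc {ν : Type*} (T : ParentTree ν) (u v : ν) : Prop :=
  ∃ n : ℕ, T.parent^[n] v = u

/-- `v` is a leaf of `T`. -/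
def IsLeaf {ν : Type*} (T : ParentTree ν) (v : ν) : Prop :=
  ∀ w, T.parent w = v → w = v

/-- `u` is the lowest common ancestor of `x` and `y`. -/
def IsLCA {ν : Type*} (T : ParentTree ν) (u x y : ν) : Prop :=
  T.Anc u x ∧ T.Anc u y ∧ ∀ w, T.Anc w x → T.Anc w y → T.Anc w u

end ParentTree

/-- The linear order `r` on the leaf set (through `ι : Z → ν`) is consistent with the
tree `T`: the leaves below any node form a contiguous interval of `r`. -/
def ConsistentOrder {ν Z : Type*} (T : ParentTree ν) (ι : Z → ν) (r : Z → Z → Prop) : Prop :=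
  IsLinearOrder Z r ∧ ∀ u : ν, ∀ a b c : Z, r a b → r b c →
    T.Anc u (ι a) → T.Anc u (ι c) → T.Anc u (ι b)

/-- `lam` is a `(Λ,·)`-labeling of the rooted tree `T`. -/
def SGLabeling {ν Λ : Type*} [Mul Λ] (T : ParentTree ν) (lam : ν → ν → Λ) : Prop :=
  ∀ u v w, T.Anc u v → u ≠ v → T.Anc v w → v ≠ w → lam u v * lam v w = lam u w

/-! ### Rooted (binary) tree decompositions -/

/-- A tree decomposition of `G` over a binary tree whose leaf set is exactly the
vertex set of `G`; nodes are positions, bags are attached to positions, and the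
connectivity condition is expressed via paths in the tree. -/
structure BTreeDecomp (X : Type*) [Fintype X] (G : SimpleGraph X) where
  tree : BTree X
  pos : X → List Bool
  pos_spec : ∀ x, tree.subtreeAt (pos x) = some (BTree.leaf x)
  leaves_eq : tree.leaves = (Finset.univ : Finset X).val
  bag : List Bool → Set X
  bag_nonempty : ∀ x : X, ∃ p, tree.IsPos p ∧ x ∈ bag p
  bag_path : ∀ x : X, ∀ p q r : List Bool, tree.IsPos p → tree.IsPos q →
    x ∈ bag p → x ∈ bag q → lcp p q <+: r → (r <+: p ∨ r <+: q) → x ∈ bag r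
  bag_edge : ∀ x y : X, G.Adj x y → ∃ p, tree.IsPos p ∧ x ∈ bag p ∧ y ∈ bag p

/-! ### Alternating cycles -/

/-- `(x 0, y 0), …, (x (m-1), y (m-1))` is a (strict) alternating cycle:
the pairs are incomparable, `x i ≤ y (i+1 mod m)`, and these are the only
comparabilities among the listed elements. -/
def IsAltCycle {X : Type*} [PartialOrder X] (m : ℕ) (x y : ℕ → X) : Prop :=
  2 ≤ m ∧
  (∀ i < m, ¬ x i ≤ y i ∧ ¬ y i ≤ x i) ∧
  (∀ i < m, x i ≤ y ((i + 1) % m)) ∧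
  (∀ i < m, ∀ j < m, x i ≤ y j → j = (i + 1) % m) ∧
  (∀ i < m, ∀ j < m, x i ≤ x j → x i = x j) ∧
  (∀ i < m, ∀ j < m, y i ≤ y j → y i = y j) ∧
  (∀ i < m, ∀ j < m, y i ≤ x j → y i = x j)

/-! ### Auxiliary: explicit description of the Kelly order -/

/-- Explicit description of the reflexive-transitive closure `kellyLE`. -/
def kellyLE' (k : ℕ) : KellyIdx k → KellyIdx k → Prop
  | Sum.inl (Sum.inl j), Sum.inl (Sum.inl j') => j = j'
  | Sum.inl (Sum.inl j), Sum.inl (Sum.inr j') => j ≠ j'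
  | Sum.inl (Sum.inl j), Sum.inr (Sum.inl i) => (j : ℕ) + 1 ≤ (i : ℕ)
  | Sum.inl (Sum.inl j), Sum.inr (Sum.inr i) => (i : ℕ) ≤ (j : ℕ)
  | Sum.inl (Sum.inr j), Sum.inl (Sum.inr j') => j = j'
  | Sum.inr (Sum.inl i), Sum.inl (Sum.inr j) => (i : ℕ) ≤ (j : ℕ)
  | Sum.inr (Sum.inl i), Sum.inr (Sum.inl i') => (i : ℕ) ≤ (i' : ℕ)
  | Sum.inr (Sum.inr i), Sum.inl (Sum.inr j) => (j : ℕ) + 1 ≤ (i : ℕ)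
  | Sum.inr (Sum.inr i), Sum.inr (Sum.inr i') => (i' : ℕ) ≤ (i : ℕ)
  | _, _ => False

lemma kgenAC {k : ℕ} (j : Fin (k - 2)) (i : Fin (k - 1)) (h : (j : ℕ) + 1 ≤ (i : ℕ)) :
    kellyGen k (Sum.inl (Sum.inl j)) (Sum.inr (Sum.inl i)) := h

lemma kgenCB {k : ℕ} (i : Fin (k - 1)) (j : Fin (k - 2)) (h : (i : ℕ) ≤ (j : ℕ)) :
    kellyGen k (Sum.inr (Sum.inl i)) (Sum.inl (Sum.inr j)) := h

lemma kgenAD {k : ℕ} (j : Fin (k - 2)) (i : Fin (k - 1)) (h : (i : ℕ) ≤ (j : ℕ)) :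
    kellyGen k (Sum.inl (Sum.inl j)) (Sum.inr (Sum.inr i)) := h

lemma kgenDB {k : ℕ} (i : Fin (k - 1)) (j : Fin (k - 2)) (h : (j : ℕ) + 1 ≤ (i : ℕ)) :
    kellyGen k (Sum.inr (Sum.inr i)) (Sum.inl (Sum.inr j)) := h

lemma kgenCC {k : ℕ} (i i' : Fin (k - 1)) (h : (i : ℕ) < (i' : ℕ)) :
    kellyGen k (Sum.inr (Sum.inl i)) (Sum.inr (Sum.inl i')) := h

lemma kgenDD {k : ℕ} (i i' : Fin (k - 1)) (h : (i' : ℕ) < (i : ℕ)) :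
    kellyGen k (Sum.inr (Sum.inr i)) (Sum.inr (Sum.inr i')) := h

lemma kellyLE_iff {k : ℕ} (p q : KellyIdx k) : kellyLE k p q ↔ kellyLE' k p q := by
  constructor
  · intro h
    induction h with
    | refl => rcases p with (j | j) | (i | i) <;> simp [kellyLE']
    | @tail m r hm hgen ih =>
      rcases m with (j1 | j1) | (i1 | i1) <;> rcases r with (j2 | j2) | (i2 | i2) <;>
        rcases p with (j0 | j0) | (i0 | i0) <;>
        simp_all [kellyGen, kellyLE', Fin.ext_iff] <;> omega
  · intro h
    rcases p with (j0 | j0) | (i0 | i0) <;> rcases q with (j1 | j1) | (i1 | i1)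
    · have h' : j0 = j1 := h
      subst h'; exact Relation.ReflTransGen.refl
    · have h' : j0 ≠ j1 := h
      have hv : (j0 : ℕ) ≠ (j1 : ℕ) := fun e => h' (Fin.ext e)
      have hb0 := j0.isLt
      have hb1 := j1.isLt
      rcases Nat.lt_or_ge (j0 : ℕ) (j1 : ℕ) with hlt | hge
      · exact Relation.ReflTransGen.head
          (kgenAC j0 (⟨(j0 : ℕ) + 1, by omega⟩ : Fin (k - 1)) (by simp))
          (Relation.ReflTransGen.single (kgenCB _ j1 (by simp; omega)))
      · exact Relation.ReflTransGen.head
          (kgenAD j0 (⟨(j0 : ℕ), by omega⟩ : Fin (k - 1)) (by simp))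
          (Relation.ReflTransGen.single (kgenDB _ j1 (by simp; omega)))
    · exact Relation.ReflTransGen.single (kgenAC _ _ h)
    · exact Relation.ReflTransGen.single (kgenAD _ _ h)
    · exact absurd h id
    · have h' : j0 = j1 := h
      subst h'; exact Relation.ReflTransGen.refl
    · exact absurd h id
    · exact absurd h id
    · exact absurd h id
    · exact Relation.ReflTransGen.single (kgenCB _ _ h)
    · have h' : (i0 : ℕ) ≤ (i1 : ℕ) := h
      rcases Nat.eq_or_lt_of_le h' with he | hlt
      · have : i0 = i1 := Fin.ext he
        subst this; exact Relation.ReflTransGen.refl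
      · exact Relation.ReflTransGen.single (kgenCC _ _ hlt)
    · exact absurd h id
    · exact absurd h id
    · exact Relation.ReflTransGen.single (kgenDB _ _ h)
    · exact absurd h id
    · have h' : (i1 : ℕ) ≤ (i0 : ℕ) := h
      rcases Nat.eq_or_lt_of_le h' with he | hlt
      · have : i0 = i1 := Fin.ext he.symm
        subst this; exact Relation.ReflTransGen.refl
      · exact Relation.ReflTransGen.single (kgenDD _ _ hlt)

/-! ### STATEMENT 16: a minimal set of comparabilities exhibiting a Kelly example -/

theorem kelly_from_witnesses (k : ℕ) (hk : 3 ≤ k) (P : Type) [PartialOrder P]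
    (a b c d : ℕ → P)
    (h1 : ∀ j, 1 ≤ j → j ≤ k - 1 →
      a j ≤ c j ∧ c j ≤ b (j + 1) ∧ d j ≤ b j ∧ a (j + 1) ≤ d j)
    (h2 : ∀ j, 1 ≤ j → j ≤ k - 2 → c j ≤ c (j + 1) ∧ d (j + 1) ≤ d j)
    (h3 : ∀ j, 1 ≤ j → j ≤ k → ¬ a j ≤ b j) :
    ∃ φ : KellyIdx k → P, Function.Injective φ ∧
      (∀ p q, kellyLE k p q ↔ φ p ≤ φ q) ∧
      (∀ i : Fin (k - 2), φ (Sum.inl (Sum.inl i)) = a ((i : ℕ) + 2)) ∧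
      (∀ i : Fin (k - 2), φ (Sum.inl (Sum.inr i)) = b ((i : ℕ) + 2)) ∧
      (∀ i : Fin (k - 1), φ (Sum.inr (Sum.inl i)) = c ((i : ℕ) + 1)) ∧
      (∀ i : Fin (k - 1), φ (Sum.inr (Sum.inr i)) = d ((i : ℕ) + 1)) := by
  -- monotone chains
  have hcc : ∀ j i, 1 ≤ i → i ≤ j → j ≤ k - 1 → c i ≤ c j := by
    intro j
    induction j with
    | zero => intro i hx1 hx2 _; omega
    | succ n ih =>
      intro i hx1 hx2 hx3
      rcases Nat.eq_or_lt_of_le hx2 with h | h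
      · subst h; exact le_rfl
      · exact (ih i hx1 (by omega) (by omega)).trans (h2 n (by omega) (by omega)).1
  have hdd : ∀ j i, 1 ≤ i → i ≤ j → j ≤ k - 1 → d j ≤ d i := by
    intro j
    induction j with
    | zero => intro i hx1 hx2 _; omega
    | succ n ih =>
      intro i hx1 hx2 hx3
      rcases Nat.eq_or_lt_of_le hx2 with h | h
      · subst h; exact le_rfl
      · exact ((h2 n (by omega) (by omega)).2).trans (ih i hx1 (by omega) (by omega))
  have halec : ∀ m i, 1 ≤ m → m ≤ i → i ≤ k - 1 → a m ≤ c i := by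
    intro m i hm hmi hik
    exact (h1 m hm (by omega)).1.trans (hcc i m hm hmi hik)
  have hcleb : ∀ i j, 1 ≤ i → i < j → j ≤ k → c i ≤ b j := by
    intro i j hi hij hjk
    have hb := (h1 (j - 1) (by omega) (by omega)).2.1
    rw [show j - 1 + 1 = j by omega] at hb
    exact (hcc (j - 1) i hi (by omega) (by omega)).trans hb
  have haled : ∀ m i, 1 ≤ i → i + 1 ≤ m → m ≤ k → a m ≤ d i := by
    intro m i hi him hmk
    have ha := (h1 (m - 1) (by omega) (by omega)).2.2.2
    rw [show m - 1 + 1 = m by omega] at ha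
    exact ha.trans (hdd (m - 1) i hi (by omega) (by omega))
  have hdleb : ∀ i j, 1 ≤ j → j ≤ i → i ≤ k - 1 → d i ≤ b j := by
    intro i j hj hji hik
    exact (hdd i j hj hji hik).trans (h1 j hj (by omega)).2.2.1
  have haleb : ∀ m j, 1 ≤ m → m ≤ k → 1 ≤ j → j ≤ k → m ≠ j → a m ≤ b j := by
    intro m j hm hmk hj hjk hne
    rcases Nat.lt_or_ge m j with h | h
    · exact (halec m m hm le_rfl (by omega)).trans (hcleb m j hm h hjk)
    · have hlt : j < m := by omega
      exact (haled m j hj (by omega) hmk).trans (h1 j hj (by omega)).2.2.1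
  -- the embedding
  let F : KellyIdx k → P := fun p => match p with
    | Sum.inl (Sum.inl j) => a ((j : ℕ) + 2)
    | Sum.inl (Sum.inr j) => b ((j : ℕ) + 2)
    | Sum.inr (Sum.inl i) => c ((i : ℕ) + 1)
    | Sum.inr (Sum.inr i) => d ((i : ℕ) + 1)
  have key : ∀ p q : KellyIdx k, kellyLE' k p q ↔ F p ≤ F q := by
    intro p q
    constructor
    · intro h
      rcases p with (j0 | j0) | (i0 | i0) <;> rcases q with (j1 | j1) | (i1 | i1) <;>
        (try (have hj0 := j0.isLt)) <;> (try (have hj1 := j1.isLt)) <;>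
        (try (have hi0 := i0.isLt)) <;> (try (have hi1 := i1.isLt))
      · have h' : j0 = j1 := h; subst h'; exact le_rfl
      · have h' : j0 ≠ j1 := h
        have hv : (j0 : ℕ) ≠ (j1 : ℕ) := fun e => h' (Fin.ext e)
        exact haleb ((j0 : ℕ) + 2) ((j1 : ℕ) + 2) (by omega) (by omega) (by omega)
          (by omega) (by omega)
      · have h' : (j0 : ℕ) + 1 ≤ (i1 : ℕ) := h
        exact halec ((j0 : ℕ) + 2) ((i1 : ℕ) + 1) (by omega) (by omega) (by omega)
      · have h' : (i1 : ℕ) ≤ (j0 : ℕ) := h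
        exact haled ((j0 : ℕ) + 2) ((i1 : ℕ) + 1) (by omega) (by omega) (by omega)
      · exact (h : False).elim
      · have h' : j0 = j1 := h; subst h'; exact le_rfl
      · exact (h : False).elim
      · exact (h : False).elim
      · exact (h : False).elim
      · have h' : (i0 : ℕ) ≤ (j1 : ℕ) := h
        exact hcleb ((i0 : ℕ) + 1) ((j1 : ℕ) + 2) (by omega) (by omega) (by omega)
      · have h' : (i0 : ℕ) ≤ (i1 : ℕ) := h
        exact hcc ((i1 : ℕ) + 1) ((i0 : ℕ) + 1) (by omega) (by omega) (by omega)
      · exact (h : False).elim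
      · exact (h : False).elim
      · have h' : (j1 : ℕ) + 1 ≤ (i0 : ℕ) := h
        exact hdleb ((i0 : ℕ) + 1) ((j1 : ℕ) + 2) (by omega) (by omega) (by omega)
      · exact (h : False).elim
      · have h' : (i1 : ℕ) ≤ (i0 : ℕ) := h
        exact hdd ((i0 : ℕ) + 1) ((i1 : ℕ) + 1) (by omega) (by omega) (by omega)
    · intro hle
      rcases p with (j0 | j0) | (i0 | i0) <;> rcases q with (j1 | j1) | (i1 | i1) <;>
        (try (have hj0 := j0.isLt)) <;> (try (have hj1 := j1.isLt)) <;>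
        (try (have hi0 := i0.isLt)) <;> (try (have hi1 := i1.isLt))
      -- (A, A)
      · show j0 = j1
        by_contra hne
        have hv : (j0 : ℕ) ≠ (j1 : ℕ) := fun e => hne (Fin.ext e)
        exact h3 ((j0 : ℕ) + 2) (by omega) (by omega)
          (hle.trans (haleb _ _ (by omega) (by omega) (by omega) (by omega) (by omega)))
      -- (A, B)
      · show j0 ≠ j1
        intro he
        have hv : (j0 : ℕ) = (j1 : ℕ) := congrArg Fin.val he
        rw [show F (Sum.inl (Sum.inl j0)) = a ((j0 : ℕ) + 2) from rfl, hv] at hle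
        exact h3 ((j1 : ℕ) + 2) (by omega) (by omega) hle
      -- (A, C)
      · show (j0 : ℕ) + 1 ≤ (i1 : ℕ)
        by_contra hne
        exact h3 ((j0 : ℕ) + 2) (by omega) (by omega)
          (hle.trans (hcleb _ _ (by omega) (by omega) (by omega)))
      -- (A, D)
      · show (i1 : ℕ) ≤ (j0 : ℕ)
        by_contra hne
        exact h3 ((j0 : ℕ) + 2) (by omega) (by omega)
          (hle.trans (hdleb _ _ (by omega) (by omega) (by omega)))
      -- (B, A)
      · exact h3 k (by omega) le_rfl
          (((haleb k ((j0 : ℕ) + 2) (by omega) (by omega) (by omega) (by omega)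
            (by omega)).trans hle).trans
            (haleb ((j1 : ℕ) + 2) k (by omega) (by omega) (by omega) (by omega) (by omega)))
      -- (B, B)
      · show j0 = j1
        by_contra hne
        have hv : (j0 : ℕ) ≠ (j1 : ℕ) := fun e => hne (Fin.ext e)
        exact h3 ((j1 : ℕ) + 2) (by omega) (by omega)
          ((haleb _ _ (by omega) (by omega) (by omega) (by omega) (by omega)).trans hle)
      -- (B, C)
      · exact h3 k (by omega) le_rfl
          (((haleb k ((j0 : ℕ) + 2) (by omega) (by omega) (by omega) (by omega)
            (by omega)).trans hle).trans (hcleb ((i1 : ℕ) + 1) k (by omega) (by omega) le_rfl))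
      -- (B, D)
      · exact h3 1 le_rfl (by omega)
          (((haleb 1 ((j0 : ℕ) + 2) le_rfl (by omega) (by omega) (by omega)
            (by omega)).trans hle).trans (hdleb ((i1 : ℕ) + 1) 1 le_rfl (by omega) (by omega)))
      -- (C, A)
      · exact h3 1 le_rfl (by omega)
          (((halec 1 ((i0 : ℕ) + 1) le_rfl (by omega) (by omega)).trans hle).trans
            (haleb ((j1 : ℕ) + 2) 1 (by omega) (by omega) le_rfl (by omega) (by omega)))
      -- (C, B)
      · show (i0 : ℕ) ≤ (j1 : ℕ)
        by_contra hne
        exact h3 ((j1 : ℕ) + 2) (by omega) (by omega)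
          ((halec _ _ (by omega) (by omega) (by omega)).trans hle)
      -- (C, C)
      · show (i0 : ℕ) ≤ (i1 : ℕ)
        by_contra hne
        exact h3 ((i1 : ℕ) + 2) (by omega) (by omega)
          (((halec _ _ (by omega) (by omega) (by omega)).trans hle).trans
            (hcleb _ _ (by omega) (by omega) (by omega)))
      -- (C, D)
      · exact h3 1 le_rfl (by omega)
          (((halec 1 ((i0 : ℕ) + 1) le_rfl (by omega) (by omega)).trans hle).trans
            (hdleb ((i1 : ℕ) + 1) 1 le_rfl (by omega) (by omega)))
      -- (D, A)
      · exact h3 k (by omega) le_rfl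
          (((haled k ((i0 : ℕ) + 1) (by omega) (by omega) le_rfl).trans hle).trans
            (haleb ((j1 : ℕ) + 2) k (by omega) (by omega) (by omega) (by omega) (by omega)))
      -- (D, B)
      · show (j1 : ℕ) + 1 ≤ (i0 : ℕ)
        by_contra hne
        exact h3 ((j1 : ℕ) + 2) (by omega) (by omega)
          ((haled _ _ (by omega) (by omega) (by omega)).trans hle)
      -- (D, C)
      · exact h3 k (by omega) le_rfl
          (((haled k ((i0 : ℕ) + 1) (by omega) (by omega) le_rfl).trans hle).trans
            (hcleb ((i1 : ℕ) + 1) k (by omega) (by omega) le_rfl))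
      -- (D, D)
      · show (i1 : ℕ) ≤ (i0 : ℕ)
        by_contra hne
        exact h3 ((i0 : ℕ) + 2) (by omega) (by omega)
          (((haled _ _ (by omega) (by omega) (by omega)).trans hle).trans
            (hdleb _ _ (by omega) (by omega) (by omega)))
  refine ⟨F, ?_, ?_, fun i => rfl, fun i => rfl, fun i => rfl, fun i => rfl⟩
  · intro p q hpq
    have hA := (key p q).mpr (le_of_eq hpq)
    have hB := (key q p).mpr (le_of_eq hpq.symm)
    clear hpq key
    rcases p with (j0 | j0) | (i0 | i0) <;> rcases q with (j1 | j1) | (i1 | i1) <;>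
      first
      | exact (show False from hA).elim
      | exact (show False from hB).elim
      | exact congrArg (fun t => (Sum.inl (Sum.inl t) : KellyIdx k)) (show j0 = j1 from hA)
      | exact congrArg (fun t => (Sum.inl (Sum.inr t) : KellyIdx k)) (show j0 = j1 from hA)
      | exact congrArg (fun t => (Sum.inr (Sum.inl t) : KellyIdx k))
          (Fin.ext (Nat.le_antisymm (show (i0 : ℕ) ≤ (i1 : ℕ) from hA)
            (show (i1 : ℕ) ≤ (i0 : ℕ) from hB)))
      | exact congrArg (fun t => (Sum.inr (Sum.inr t) : KellyIdx k))
          (Fin.ext (Nat.le_antisymm (show (i0 : ℕ) ≤ (i1 : ℕ) from hB)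
            (show (i1 : ℕ) ≤ (i0 : ℕ) from hA)))
  · intro p q
    rw [kellyLE_iff]
    exact key p q
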